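/- Let L be a positive integer, B a symmetric L×L real matrix, i₀ ∈ Fin L, S a finite set of integers, and F : (Fin L → ℤ) → ℂ a function such that (i) whenever F ℓ ≠ 0 one has ℓ v ∈ S for every index v ≠ i₀, and (ii) there exist constants c, d ≥ 0 with ‖F ℓ‖ ≤ c·(1 + |ℓ i₀|)^d for all ℓ. If B i₀ i₀ < 0, then for every τ ∈ ℂ with Im τ > 0 the family ℓ ↦ F ℓ · exp(2πi τ · (−(Σ_{v,w} (ℓ v) · B v w · (ℓ w))/4)) is absolutely summable over ℓ : Fin L → ℤ; and if B i₀ i₀ > 0, then this family is absolutely summable for every τ with Im τ < 0. -/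

import Mathlib

open Complex Real

private lemma quad_bound {L : ℕ} (B : Matrix (Fin L) (Fin L) ℝ) (i₀ : Fin L)
    (ℓ : Fin L → ℤ) (R Bm : ℝ) (hR0 : 0 ≤ R) (hBm0 : 0 ≤ Bm)
    (hBm : ∀ v w, |B v w| ≤ Bm)
    (hl : ∀ v, v ≠ i₀ → |(ℓ v : ℝ)| ≤ R) :
    |(∑ v, ∑ w, (ℓ v : ℝ) * B v w * (ℓ w : ℝ)) - B i₀ i₀ * (ℓ i₀ : ℝ)^2|
      ≤ ((L:ℝ)^2 * Bm * R) * |(ℓ i₀ : ℝ)| + (L:ℝ)^2 * Bm * R^2 := by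
  classical
  set n : ℝ := (ℓ i₀ : ℝ) with hn
  have habs : ∀ v, |(ℓ v : ℝ)| ≤ R + |n| := by
    intro v
    by_cases hv : v = i₀
    · subst hv; rw [← hn]; linarith
    · exact (hl v hv).trans (by linarith [abs_nonneg n])
  have hsum : (∑ v, ∑ w, (ℓ v : ℝ) * B v w * (ℓ w : ℝ))
      = ∑ p ∈ (Finset.univ ×ˢ Finset.univ : Finset (Fin L × Fin L)),
          (ℓ p.1 : ℝ) * B p.1 p.2 * (ℓ p.2 : ℝ) := (Finset.sum_product' ..).symm
  have hmem : (i₀, i₀) ∈ (Finset.univ ×ˢ Finset.univ : Finset (Fin L × Fin L)) := by simp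
  rw [hsum, ← Finset.add_sum_erase _ _ hmem]
  have h0 : (ℓ i₀ : ℝ) * B i₀ i₀ * (ℓ i₀ : ℝ) = B i₀ i₀ * n^2 := by rw [← hn]; ring
  rw [h0, add_sub_cancel_left]
  set E := ((Finset.univ ×ˢ Finset.univ : Finset (Fin L × Fin L)).erase (i₀, i₀)) with hE
  have hterm : ∀ p ∈ E, |(ℓ p.1 : ℝ) * B p.1 p.2 * (ℓ p.2 : ℝ)| ≤ Bm * (R * (R + |n|)) := by
    intro p hp
    have hne : p ≠ (i₀, i₀) := Finset.ne_of_mem_erase hp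
    have h2 : |(ℓ p.1 : ℝ)| * |(ℓ p.2 : ℝ)| ≤ R * (R + |n|) := by
      by_cases h1 : p.1 = i₀
      · have h2' : p.2 ≠ i₀ := by
          intro h; exact hne (Prod.ext h1 h)
        calc |(ℓ p.1 : ℝ)| * |(ℓ p.2 : ℝ)| ≤ (R + |n|) * R :=
              mul_le_mul (habs p.1) (hl p.2 h2') (abs_nonneg _) (by positivity)
          _ = R * (R + |n|) := mul_comm _ _
      · exact mul_le_mul (hl p.1 h1) (habs p.2) (abs_nonneg _) hR0
    calc |(ℓ p.1 : ℝ) * B p.1 p.2 * (ℓ p.2 : ℝ)|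
        = |B p.1 p.2| * (|(ℓ p.1 : ℝ)| * |(ℓ p.2 : ℝ)|) := by
          rw [abs_mul, abs_mul]; ring
      _ ≤ Bm * (R * (R + |n|)) := mul_le_mul (hBm _ _) h2 (by positivity) hBm0
  calc |∑ p ∈ E, (ℓ p.1 : ℝ) * B p.1 p.2 * (ℓ p.2 : ℝ)|
      ≤ ∑ p ∈ E, |(ℓ p.1 : ℝ) * B p.1 p.2 * (ℓ p.2 : ℝ)| := Finset.abs_sum_le_sum_abs _ _
    _ ≤ E.card • (Bm * (R * (R + |n|))) := Finset.sum_le_card_nsmul _ _ _ hterm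
    _ ≤ (L:ℝ)^2 * (Bm * (R * (R + |n|))) := by
        rw [nsmul_eq_mul]
        have hcard : (E.card : ℝ) ≤ (L:ℝ)^2 := by
          have h1 : E.card ≤ L * L := by
            calc E.card ≤ (Finset.univ ×ˢ Finset.univ : Finset (Fin L × Fin L)).card :=
                Finset.card_le_card (Finset.erase_subset _ _)
              _ = L * L := by simp
          calc (E.card : ℝ) ≤ ((L * L : ℕ) : ℝ) := Nat.cast_le.mpr h1
            _ = (L:ℝ)^2 := by push_cast; ring
        exact mul_le_mul_of_nonneg_right hcard (by positivity)
    _ = ((L:ℝ)^2 * Bm * R) * |n| + (L:ℝ)^2 * Bm * R^2 := by ring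

set_option maxHeartbeats 1000000 in
private lemma master {L : ℕ} (B : Matrix (Fin L) (Fin L) ℝ) (i₀ : Fin L) (S : Finset ℤ)
    (F : (Fin L → ℤ) → ℂ)
    (hsupp : ∀ ℓ : Fin L → ℤ, F ℓ ≠ 0 → ∀ v : Fin L, v ≠ i₀ → ℓ v ∈ S)
    {c d : ℝ} (hc : 0 ≤ c) (hd : 0 ≤ d)
    (hg : ∀ ℓ : Fin L → ℤ, ‖F ℓ‖ ≤ c * (1 + |(ℓ i₀ : ℝ)|) ^ d)
    (τ : ℂ) (hneg : B i₀ i₀ * τ.im < 0) :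
    Summable fun ℓ : Fin L → ℤ =>
      ‖F ℓ * Complex.exp (2 * Real.pi * Complex.I * τ *
        (-((∑ v, ∑ w, (ℓ v : ℝ) * B v w * (ℓ w : ℝ) : ℝ) : ℂ) / 4))‖ := by
  classical
  set t : ℝ := Real.pi * τ.im / 2 with ht
  have htb : t * B i₀ i₀ < 0 := by
    have h : t * B i₀ i₀ = (Real.pi / 2) * (B i₀ i₀ * τ.im) := by rw [ht]; ring
    rw [h]
    exact mul_neg_of_pos_of_neg (by positivity) hneg
  set R : ℝ := ∑ s ∈ S, |(s : ℝ)| with hRdef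
  have hR0 : 0 ≤ R := Finset.sum_nonneg fun _ _ => abs_nonneg _
  have hRS : ∀ s ∈ S, |(s : ℝ)| ≤ R := fun s hs =>
    Finset.single_le_sum (f := fun s : ℤ => |(s : ℝ)|) (fun _ _ => abs_nonneg _) hs
  set Bm : ℝ := ∑ v : Fin L, ∑ w : Fin L, |B v w| with hBmdef
  have hBm : ∀ v w, |B v w| ≤ Bm := by
    intro v w
    calc |B v w| ≤ ∑ w' : Fin L, |B v w'| :=
        Finset.single_le_sum (f := fun w' => |B v w'|) (fun _ _ => abs_nonneg _)
          (Finset.mem_univ w)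
      _ ≤ Bm := Finset.single_le_sum (f := fun v' => ∑ w' : Fin L, |B v' w'|)
          (fun _ _ => Finset.sum_nonneg fun _ _ => abs_nonneg _) (Finset.mem_univ v)
  have hBm0 : 0 ≤ Bm := le_trans (abs_nonneg _) (hBm i₀ i₀)
  set C : ℝ := (L:ℝ)^2 * Bm * R with hC
  have hC0 : 0 ≤ C := by positivity
  set C' : ℝ := (L:ℝ)^2 * Bm * R^2 with hC'
  have hC'0 : 0 ≤ C' := by positivity
  set k : ℕ := ⌈d⌉₊ with hk
  set A : ℝ := c * Real.exp (|t| * C') * 2^k with hA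
  have hA0 : 0 ≤ A := by positivity
  set T : Finset ({ j // j ≠ i₀ } → ℤ) := Fintype.piFinset (fun _ => S) with hTdef
  set f₁ : ℤ → ℝ := fun m =>
    A * ((1 + |(m : ℝ)|^k) * Real.exp (t * B i₀ i₀ * (m : ℝ)^2 + |t| * C * |(m : ℝ)|))
    with hf₁
  set f₂ : ({ j // j ≠ i₀ } → ℤ) → ℝ := fun g => if g ∈ T then (1:ℝ) else 0 with hf₂
  set G : ℤ × ({ j // j ≠ i₀ } → ℤ) → ℝ := fun p => f₁ p.1 * f₂ p.2 with hG
  have hf₁0 : ∀ m, 0 ≤ f₁ m := by intro m; rw [hf₁]; positivity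
  have hf₂0 : ∀ g, 0 ≤ f₂ g := by intro g; rw [hf₂]; dsimp only; split <;> norm_num
  have hG0 : ∀ p, 0 ≤ G p := fun p => mul_nonneg (hf₁0 _) (hf₂0 _)
  -- summability of the bound
  have hTpos : 0 < -(t * B i₀ i₀) / Real.pi := div_pos (neg_pos.mpr htb) Real.pi_pos
  have key : ∀ jk : ℕ, Summable fun m : ℤ =>
      |(m : ℝ)|^jk * Real.exp (t * B i₀ i₀ * (m : ℝ)^2 + |t| * C * |(m : ℝ)|) := by
    intro jk
    have h := summable_pow_mul_jacobiTheta₂_term_bound (|t| * C / (2 * Real.pi)) hTpos jk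
    apply h.congr
    intro m
    have h1 : -Real.pi * ((-(t * B i₀ i₀) / Real.pi) * (m : ℝ)^2
        - 2 * (|t| * C / (2 * Real.pi)) * |(m : ℝ)|)
        = t * B i₀ i₀ * (m : ℝ)^2 + |t| * C * |(m : ℝ)| := by
      field_simp
      ring
    rw [← h1]
    push_cast
    ring_nf
  have hsumf₁ : Summable f₁ := by
    have h := ((key 0).add (key k)).mul_left A
    apply h.congr
    intro m
    simp only [pow_zero, one_mul, hf₁]
    ring
  have hsumf₂ : Summable f₂ :=
    summable_of_ne_finset_zero (s := T) fun g hg' => if_neg hg'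
  have hsumG : Summable G := hsumf₁.mul_of_nonneg hsumf₂ hf₁0 hf₂0
  have hsumGe : Summable (G ∘ (Equiv.funSplitAt i₀ ℤ)) :=
    (Equiv.summable_iff _).mpr hsumG
  apply Summable.of_nonneg_of_le (fun ℓ => norm_nonneg _) _ hsumGe
  intro ℓ
  set Q : ℝ := ∑ v, ∑ w, (ℓ v : ℝ) * B v w * (ℓ w : ℝ) with hQdef
  set n : ℝ := (ℓ i₀ : ℝ) with hn
  have hre : (2 * (Real.pi : ℂ) * Complex.I * τ * (-((Q : ℝ) : ℂ) / 4)).re = t * Q := by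
    have h1 : 2 * (Real.pi : ℂ) * Complex.I * τ * (-((Q : ℝ) : ℂ) / 4)
        = (((-Real.pi * Q / 2 : ℝ)) : ℂ) * (Complex.I * τ) := by push_cast; ring
    rw [h1, Complex.re_ofReal_mul]
    have h2 : (Complex.I * τ).re = -τ.im := by simp
    rw [h2, ht]; ring
  have hGe : G (Equiv.funSplitAt i₀ ℤ ℓ) = f₁ (ℓ i₀) * f₂ (fun j => ℓ j.1) := rfl
  show ‖F ℓ * Complex.exp _‖ ≤ _
  rw [norm_mul, Complex.norm_exp, hre]
  by_cases hF : F ℓ = 0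
  · rw [hF, norm_zero, zero_mul]
    exact hG0 _
  · have hmemT : (fun j : { j // j ≠ i₀ } => ℓ j.1) ∈ T := by
      rw [hTdef, Fintype.mem_piFinset]
      exact fun j => hsupp ℓ hF j.1 j.2
    have hf₂1 : f₂ (fun j => ℓ j.1) = 1 := if_pos hmemT
    have hQ : |Q - B i₀ i₀ * n^2| ≤ C * |n| + C' :=
      quad_bound B i₀ ℓ R Bm hR0 hBm0 hBm (fun v hv => hRS _ (hsupp ℓ hF v hv))
    have hexp : t * Q ≤ t * B i₀ i₀ * n^2 + |t| * C * |n| + |t| * C' := by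
      have h1 : t * (Q - B i₀ i₀ * n^2) ≤ |t| * (C * |n| + C') :=
        le_trans (le_abs_self _)
          (by rw [abs_mul]; exact mul_le_mul_of_nonneg_left hQ (abs_nonneg t))
      nlinarith [h1]
    have hpow : (1 + |n|) ^ d ≤ 2^k * (1 + |n|^k) := by
      have h1 : (1 + |n|) ^ d ≤ (1 + |n|) ^ ((k : ℕ) : ℝ) :=
        Real.rpow_le_rpow_of_exponent_le (by linarith [abs_nonneg n]) (Nat.le_ceil d)
      rw [Real.rpow_natCast] at h1
      refine h1.trans ?_
      rcases le_total |n| 1 with h | h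
      · calc (1 + |n|)^k ≤ 2^k := pow_le_pow_left₀ (by positivity) (by linarith) k
          _ ≤ 2^k * (1 + |n|^k) := le_mul_of_one_le_right (by positivity)
              (by linarith [pow_nonneg (abs_nonneg n) k])
      · calc (1 + |n|)^k ≤ (2 * |n|)^k := pow_le_pow_left₀ (by positivity) (by linarith) k
          _ = 2^k * |n|^k := mul_pow _ _ _
          _ ≤ 2^k * (1 + |n|^k) := by
              have : |n|^k ≤ 1 + |n|^k := by linarith [pow_nonneg (abs_nonneg n) k]
              exact mul_le_mul_of_nonneg_left this (by positivity)
    calc ‖F ℓ‖ * Real.exp (t * Q)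
        ≤ (c * (1 + |n|) ^ d) * Real.exp (t * Q) :=
          mul_le_mul_of_nonneg_right (hg ℓ) (Real.exp_pos _).le
      _ ≤ (c * (2^k * (1 + |n|^k)))
            * Real.exp (t * B i₀ i₀ * n^2 + |t| * C * |n| + |t| * C') :=
          mul_le_mul (mul_le_mul_of_nonneg_left hpow hc) (Real.exp_le_exp.mpr hexp)
            (Real.exp_pos _).le (by positivity)
      _ = f₁ (ℓ i₀) * f₂ (fun j => ℓ j.1) := by
          rw [hf₂1, mul_one, hf₁]
          simp only [← hn]
          rw [Real.exp_add, hA]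
          ring
      _ = G (Equiv.funSplitAt i₀ ℤ ℓ) := hGe.symm

/-- convergence of homological blocks for plumbings with a single
high-valency vertex.  If `B i₀ i₀ < 0` the series converges for `Im τ > 0`
(i.e. `|q| < 1`), and if `B i₀ i₀ > 0` it converges for `Im τ < 0`. -/
theorem homological_block_convergence
    (L : ℕ) (hL : 0 < L) (B : Matrix (Fin L) (Fin L) ℝ) (hB : B.IsSymm)
    (i₀ : Fin L) (S : Finset ℤ) (F : (Fin L → ℤ) → ℂ)
    (hsupp : ∀ ℓ : Fin L → ℤ, F ℓ ≠ 0 → ∀ v : Fin L, v ≠ i₀ → ℓ v ∈ S)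
    (hgrowth : ∃ c d : ℝ, 0 ≤ c ∧ 0 ≤ d ∧
      ∀ ℓ : Fin L → ℤ, ‖F ℓ‖ ≤ c * (1 + |(ℓ i₀ : ℝ)|) ^ d) :
    (B i₀ i₀ < 0 → ∀ τ : ℂ, 0 < τ.im →
      Summable fun ℓ : Fin L → ℤ =>
        ‖F ℓ * Complex.exp (2 * Real.pi * Complex.I * τ *
          (-((∑ v, ∑ w, (ℓ v : ℝ) * B v w * (ℓ w : ℝ) : ℝ) : ℂ) / 4))‖) ∧
    (0 < B i₀ i₀ → ∀ τ : ℂ, τ.im < 0 →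
      Summable fun ℓ : Fin L → ℤ =>
        ‖F ℓ * Complex.exp (2 * Real.pi * Complex.I * τ *
          (-((∑ v, ∑ w, (ℓ v : ℝ) * B v w * (ℓ w : ℝ) : ℝ) : ℂ) / 4))‖) := by
  obtain ⟨c, d, hc, hd, hg⟩ := hgrowth
  constructor
  · intro hb τ him
    exact master B i₀ S F hsupp hc hd hg τ (mul_neg_of_neg_of_pos hb him)
  · intro hb τ him
    exact master B i₀ S F hsupp hc hd hg τ (mul_neg_of_pos_of_neg hb him)
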